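/- Let (X, Y) be a centered bivariate Gaussian vector with unit variances and correlation ρ satisfying |ρ| ≤ 1/2. Then |E[sign(X) · sign(Y)] - (2/π)ρ| ≤ |ρ|³. -/

import Mathlib

open MeasureTheory ProbabilityTheory Real Set
open scoped ENNReal NNReal


lemma measurable_realSign : Measurable Real.sign := by
  have : Real.sign = fun r : ℝ => if r < 0 then (-1 : ℝ) else if 0 < r then 1 else 0 := by
    funext r; rfl
  rw [this]
  exact Measurable.ite (measurableSet_lt measurable_id measurable_const) measurable_const
    (Measurable.ite (measurableSet_lt measurable_const measurable_id) measurable_const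
      measurable_const)

lemma abs_realSign_le (x : ℝ) : |Real.sign x| ≤ 1 := by
  rcases Real.sign_apply_eq x with h | h | h <;> rw [h] <;> norm_num

lemma angular_integrable (a : ℝ) (c d : ℝ) :
    IntervalIntegrable (fun θ => Real.sign (Real.cos θ) * Real.sign (Real.sin (θ + a)))
      volume c d := by
  rw [intervalIntegrable_iff]
  haveI : IsFiniteMeasure (volume.restrict (Set.uIoc c d)) :=
    ⟨by rw [Measure.restrict_apply MeasurableSet.univ, Set.univ_inter]; exact measure_Ioc_lt_top⟩
  apply Integrable.mono' (integrable_const (1:ℝ))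
  · exact ((measurable_realSign.comp Real.measurable_cos).mul
      (measurable_realSign.comp ((Real.measurable_sin.comp (measurable_id.add_const a))))).aestronglyMeasurable
  · apply Filter.Eventually.of_forall
    intro θ
    rw [norm_mul, Real.norm_eq_abs, Real.norm_eq_abs]
    calc |Real.sign (Real.cos θ)| * |Real.sign (Real.sin (θ + a))| ≤ 1 * 1 :=
      mul_le_mul (abs_realSign_le _) (abs_realSign_le _) (abs_nonneg _) zero_le_one
    _ = 1 := by ring

lemma piece_eval {g : ℝ → ℝ} {c d v : ℝ} (hcd : c ≤ d)
    (hint : IntervalIntegrable g volume c d)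
    (hg : ∀ θ ∈ Set.Ioo c d, g θ = v) : ∫ θ in c..d, g θ = v * (d - c) := by
  rw [intervalIntegral.integral_of_le hcd, MeasureTheory.integral_Ioc_eq_integral_Ioo,
    setIntegral_congr_fun measurableSet_Ioo hg, setIntegral_const, Real.volume_real_Ioo_of_le hcd, smul_eq_mul, mul_comm]

lemma angular_eval_nonneg {a : ℝ} (h0 : 0 ≤ a) (h2 : a ≤ π / 2) :
    ∫ θ in (-π)..π, Real.sign (Real.cos θ) * Real.sign (Real.sin (θ + a)) = 4 * a := by
  have hpi := Real.pi_pos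
  set g : ℝ → ℝ := fun θ => Real.sign (Real.cos θ) * Real.sign (Real.sin (θ + a)) with hg_def
  have hint : ∀ c d : ℝ, IntervalIntegrable g volume c d := angular_integrable a
  have split : ∫ θ in (-π)..π, g θ =
      (∫ θ in (-π)..(-(π/2)), g θ) + (∫ θ in (-(π/2))..(-a), g θ) + (∫ θ in (-a)..(π/2), g θ)
        + (∫ θ in (π/2)..(π - a), g θ) + (∫ θ in (π - a)..π, g θ) := by
    rw [intervalIntegral.integral_add_adjacent_intervals (hint _ _) (hint _ _),
      intervalIntegral.integral_add_adjacent_intervals (hint _ _) (hint _ _),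
      intervalIntegral.integral_add_adjacent_intervals (hint _ _) (hint _ _),
      intervalIntegral.integral_add_adjacent_intervals (hint _ _) (hint _ _)]
  have p1 : ∫ θ in (-π)..(-(π/2)), g θ = 1 * (-(π/2) - (-π)) := by
    apply piece_eval (by linarith) (hint _ _)
    intro θ ⟨hl, hr⟩
    have hcos : Real.cos θ < 0 := by
      rw [← Real.cos_neg]
      exact Real.cos_neg_of_pi_div_two_lt_of_lt (by linarith) (by linarith)
    have hsin : Real.sin (θ + a) < 0 :=
      Real.sin_neg_of_neg_of_neg_pi_lt (by linarith) (by linarith)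
    simp [hg_def, Real.sign_of_neg hcos, Real.sign_of_neg hsin]
  have p2 : ∫ θ in (-(π/2))..(-a), g θ = (-1) * (-a - (-(π/2))) := by
    apply piece_eval (by linarith) (hint _ _)
    intro θ ⟨hl, hr⟩
    have hcos : 0 < Real.cos θ := Real.cos_pos_of_mem_Ioo ⟨by linarith, by linarith⟩
    have hsin : Real.sin (θ + a) < 0 :=
      Real.sin_neg_of_neg_of_neg_pi_lt (by linarith) (by linarith)
    simp [hg_def, Real.sign_of_pos hcos, Real.sign_of_neg hsin]
  have p3 : ∫ θ in (-a)..(π/2), g θ = 1 * (π/2 - (-a)) := by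
    apply piece_eval (by linarith) (hint _ _)
    intro θ ⟨hl, hr⟩
    have hcos : 0 < Real.cos θ := Real.cos_pos_of_mem_Ioo ⟨by linarith, by linarith⟩
    have hsin : 0 < Real.sin (θ + a) :=
      Real.sin_pos_of_pos_of_lt_pi (by linarith) (by linarith)
    simp [hg_def, Real.sign_of_pos hcos, Real.sign_of_pos hsin]
  have p4 : ∫ θ in (π/2)..(π - a), g θ = (-1) * ((π - a) - π/2) := by
    apply piece_eval (by linarith) (hint _ _)
    intro θ ⟨hl, hr⟩
    have hcos : Real.cos θ < 0 :=
      Real.cos_neg_of_pi_div_two_lt_of_lt (by linarith) (by linarith)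
    have hsin : 0 < Real.sin (θ + a) :=
      Real.sin_pos_of_pos_of_lt_pi (by linarith) (by linarith)
    simp [hg_def, Real.sign_of_neg hcos, Real.sign_of_pos hsin]
  have p5 : ∫ θ in (π - a)..π, g θ = 1 * (π - (π - a)) := by
    apply piece_eval (by linarith) (hint _ _)
    intro θ ⟨hl, hr⟩
    have hcos : Real.cos θ < 0 :=
      Real.cos_neg_of_pi_div_two_lt_of_lt (by linarith) (by linarith)
    have hsin : Real.sin (θ + a) < 0 := by
      have h1 : Real.sin (θ + a - π) > 0 :=
        Real.sin_pos_of_pos_of_lt_pi (by linarith) (by linarith)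
      have h2 := Real.sin_sub_pi (θ + a)
      linarith
    simp [hg_def, Real.sign_of_neg hcos, Real.sign_of_neg hsin]
  rw [split, p1, p2, p3, p4, p5]; ring

lemma angular_eval {a : ℝ} (h : |a| ≤ π / 2) :
    ∫ θ in (-π)..π, Real.sign (Real.cos θ) * Real.sign (Real.sin (θ + a)) = 4 * a := by
  rcases le_or_gt 0 a with h0 | h0
  · exact angular_eval_nonneg h0 (by rw [abs_of_nonneg h0] at h; exact h)
  · have key : ∫ θ in (-π)..π, Real.sign (Real.cos θ) * Real.sign (Real.sin (θ + a)) =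
        - ∫ θ in (-π)..π, Real.sign (Real.cos θ) * Real.sign (Real.sin (θ + (-a))) := by
      have := intervalIntegral.integral_comp_neg
        (a := -π) (b := π) (fun θ => Real.sign (Real.cos θ) * Real.sign (Real.sin (θ + (-a))))
      rw [neg_neg] at this
      rw [← this, ← intervalIntegral.integral_neg]
      apply intervalIntegral.integral_congr
      intro θ _
      simp only [Real.cos_neg]
      have : Real.sin (-θ + -a) = - Real.sin (θ + a) := by
        rw [show -θ + -a = -(θ + a) by ring, Real.sin_neg]
      rw [this, Real.sign_neg]
      ring
    rw [key, angular_eval_nonneg (by linarith) (by rw [abs_of_neg h0] at h; linarith)]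
    ring

noncomputable def biGaussian (ρ : ℝ) : Measure (ℝ × ℝ) :=
  if ρ = 1 then (gaussianReal 0 1).map (fun x => (x, x))
  else if ρ = -1 then (gaussianReal 0 1).map (fun x => (x, -x))
  else (volume : Measure (ℝ × ℝ)).withDensity fun p =>
    ENNReal.ofReal ((2 * π * Real.sqrt (1 - ρ ^ 2))⁻¹ *
      Real.exp (-(p.1 ^ 2 + p.2 ^ 2 - 2 * ρ * p.1 * p.2) / (2 * (1 - ρ ^ 2))))

lemma sign_mul_pos_left {r : ℝ} (hr : 0 < r) (x : ℝ) : Real.sign (r * x) = Real.sign x := by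
  rcases lt_trichotomy x 0 with h | h | h
  · rw [Real.sign_of_neg h, Real.sign_of_neg (by nlinarith)]
  · simp [h, Real.sign_zero]
  · rw [Real.sign_of_pos h, Real.sign_of_pos (by positivity)]

lemma biGaussian_integral {ρ : ℝ} (hρ : |ρ| ≤ 1/2) :
    ∫ p : ℝ × ℝ, Real.sign p.1 * Real.sign p.2 ∂(biGaussian ρ)
      = (2 / π) * Real.arcsin ρ := by
  have hpi := Real.pi_pos
  have hrr : ρ ^ 2 ≤ 1/4 := by nlinarith [abs_nonneg ρ, sq_abs ρ]
  have h1ρ : ρ ≠ 1 := by intro h; rw [h] at hρ; norm_num at hρ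
  have h2ρ : ρ ≠ -1 := by intro h; rw [h] at hρ; norm_num at hρ
  set s := Real.sqrt (1 - ρ ^ 2) with hs_def
  have hs2 : s ^ 2 = 1 - ρ ^ 2 := Real.sq_sqrt (by nlinarith)
  have hs : 0 < s := Real.sqrt_pos.mpr (by nlinarith)
  set dd : ℝ × ℝ → ℝ := fun p => (2 * π * s)⁻¹ *
    Real.exp (-(p.1 ^ 2 + p.2 ^ 2 - 2 * ρ * p.1 * p.2) / (2 * (1 - ρ ^ 2))) with hdd_def
  have hdd_cont : Continuous dd := by fun_prop
  have hdd_nonneg : ∀ p, 0 ≤ dd p := by intro p; positivity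
  -- step: withDensity
  have step1 : ∫ p : ℝ × ℝ, Real.sign p.1 * Real.sign p.2 ∂(biGaussian ρ)
      = ∫ p : ℝ × ℝ, dd p * (Real.sign p.1 * Real.sign p.2) := by
    rw [biGaussian, if_neg h1ρ, if_neg h2ρ]
    have hmeas : Measurable fun p : ℝ × ℝ => (dd p).toNNReal :=
      hdd_cont.measurable.real_toNNReal
    have heq : (fun p : ℝ × ℝ => ENNReal.ofReal ((2 * π * Real.sqrt (1 - ρ ^ 2))⁻¹ *
        Real.exp (-(p.1 ^ 2 + p.2 ^ 2 - 2 * ρ * p.1 * p.2) / (2 * (1 - ρ ^ 2)))))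
        = fun p : ℝ × ℝ => ((dd p).toNNReal : ℝ≥0∞) := rfl
    rw [heq, integral_withDensity_eq_integral_smul hmeas]
    congr 1; funext p
    rw [NNReal.smul_def, Real.coe_toNNReal _ (hdd_nonneg p), smul_eq_mul]
  -- change of variables
  set T : ℝ × ℝ →L[ℝ] ℝ × ℝ := LinearMap.toContinuousLinearMap
    (Matrix.toLin (Module.Basis.finTwoProd ℝ) (Module.Basis.finTwoProd ℝ) !![1, 0; ρ, s]) with hT_def
  have hT_apply : ∀ p : ℝ × ℝ, T p = (p.1, ρ * p.1 + s * p.2) := by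
    intro p
    show (Matrix.toLin (Module.Basis.finTwoProd ℝ) (Module.Basis.finTwoProd ℝ) !![1, 0; ρ, s]) p = _
    rw [Matrix.toLin_finTwoProd_apply]
    simp
  have hT_det : T.det = s := by
    simp only [hT_def, LinearMap.det_toContinuousLinearMap, LinearMap.det_toLin,
      Matrix.det_fin_two_of]
    ring
  have hT_inj : Set.InjOn T Set.univ := by
    intro p _ q _ h
    rw [hT_apply, hT_apply] at h
    simp only [Prod.mk.injEq] at h
    obtain ⟨h1, h2⟩ := h
    have h3 : p.2 = q.2 := by
      have hss : s * p.2 = s * q.2 := by rw [h1] at h2; linarith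
      exact mul_left_cancel₀ (ne_of_gt hs) hss
    exact Prod.ext h1 h3
  have hT_surj : T '' Set.univ = Set.univ := by
    rw [Set.image_univ, Set.eq_univ_iff_forall]
    intro p
    refine ⟨(p.1, (p.2 - ρ * p.1) / s), ?_⟩
    rw [hT_apply]
    have : ρ * p.1 + s * ((p.2 - ρ * p.1) / s) = p.2 := by field_simp; ring
    rw [this]
  set G : ℝ × ℝ → ℝ := fun p => (2 * π)⁻¹ * Real.exp (-(p.1 ^ 2 + p.2 ^ 2) / 2) *
    (Real.sign p.1 * Real.sign (ρ * p.1 + s * p.2)) with hG_def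
  have step2 : ∫ p : ℝ × ℝ, dd p * (Real.sign p.1 * Real.sign p.2) = ∫ p : ℝ × ℝ, G p := by
    rw [← setIntegral_univ, ← hT_surj,
      integral_image_eq_integral_abs_det_fderiv_smul volume MeasurableSet.univ
        (fun x _ => T.hasFDerivAt.hasFDerivWithinAt) hT_inj, setIntegral_univ]
    congr 1; funext p
    rw [hT_det, abs_of_pos hs, hT_apply, smul_eq_mul]
    have hexp : -((p.1 : ℝ) ^ 2 + (ρ * p.1 + s * p.2) ^ 2 - 2 * ρ * p.1 * (ρ * p.1 + s * p.2))
        / (2 * (1 - ρ ^ 2)) = -(p.1 ^ 2 + p.2 ^ 2) / 2 := by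
      have h1 : (1:ℝ) - ρ ^ 2 > 0 := by nlinarith
      field_simp
      ring_nf
      nlinarith [hs2]
    simp only [hdd_def, hG_def, hexp]
    have : s * ((2 * π * s)⁻¹ * Real.exp (-(p.1 ^ 2 + p.2 ^ 2) / 2) *
        (Real.sign p.1 * Real.sign (ρ * p.1 + s * p.2)))
        = (s * (2 * π * s)⁻¹) * Real.exp (-(p.1 ^ 2 + p.2 ^ 2) / 2) *
        (Real.sign p.1 * Real.sign (ρ * p.1 + s * p.2)) := by ring
    rw [this]
    congr 2
    rw [mul_inv, mul_inv]
    field_simp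
  -- polar coordinates
  have step3 : ∫ p : ℝ × ℝ, G p =
      ∫ p in polarCoord.target, p.1 • G (polarCoord.symm p) :=
    (integral_comp_polarCoord_symm G).symm
  set a := Real.arcsin ρ with ha_def
  have hsin_a : Real.sin a = ρ := Real.sin_arcsin (by nlinarith [abs_nonneg ρ]) (by nlinarith)
  have hcos_a : Real.cos a = s := by rw [ha_def, Real.cos_arcsin]
  have habs_a : |a| ≤ π / 2 := abs_le.mpr ⟨Real.neg_pi_div_two_le_arcsin ρ, Real.arcsin_le_pi_div_two ρ⟩
  have htarget : polarCoord.target = Set.Ioi (0:ℝ) ×ˢ Set.Ioo (-π) π := rfl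
  have hsymm : ∀ p : ℝ × ℝ, polarCoord.symm p = (p.1 * Real.cos p.2, p.1 * Real.sin p.2) :=
    fun p => rfl
  have step4 : ∫ p in polarCoord.target, p.1 • G (polarCoord.symm p)
      = ∫ p in Set.Ioi (0:ℝ) ×ˢ Set.Ioo (-π) π, (p.1 * Real.exp (-(p.1 ^ 2) / 2)) *
          ((2 * π)⁻¹ * (Real.sign (Real.cos p.2) * Real.sign (Real.sin (p.2 + a)))) := by
    rw [htarget]
    apply setIntegral_congr_fun (measurableSet_Ioi.prod measurableSet_Ioo)
    intro p hp
    obtain ⟨hr, hθ⟩ := hp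
    simp only [hsymm, hG_def, smul_eq_mul]
    have hr0 : (0:ℝ) < p.1 := hr
    have h1 : (p.1 * Real.cos p.2) ^ 2 + (p.1 * Real.sin p.2) ^ 2 = p.1 ^ 2 := by
      have := Real.sin_sq_add_cos_sq p.2; nlinarith
    have h2 : Real.sign (p.1 * Real.cos p.2) = Real.sign (Real.cos p.2) :=
      sign_mul_pos_left hr0 _
    have h3 : ρ * (p.1 * Real.cos p.2) + s * (p.1 * Real.sin p.2)
        = p.1 * Real.sin (p.2 + a) := by
      rw [Real.sin_add, hsin_a, hcos_a]; ring
    rw [h1, h2, h3, sign_mul_pos_left hr0]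
    ring
  have hprod : ∫ p in Set.Ioi (0:ℝ) ×ˢ Set.Ioo (-π) π, (p.1 * Real.exp (-(p.1 ^ 2) / 2)) *
          ((2 * π)⁻¹ * (Real.sign (Real.cos p.2) * Real.sign (Real.sin (p.2 + a))))
      = (∫ r in Set.Ioi (0:ℝ), r * Real.exp (-(r ^ 2) / 2)) *
        (∫ θ in Set.Ioo (-π) π, (2 * π)⁻¹ * (Real.sign (Real.cos θ) * Real.sign (Real.sin (θ + a)))) := by
    rw [MeasureTheory.Measure.volume_eq_prod ℝ ℝ]
    exact setIntegral_prod_mul (fun r => r * Real.exp (-(r ^ 2) / 2))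
      (fun θ => (2 * π)⁻¹ * (Real.sign (Real.cos θ) * Real.sign (Real.sin (θ + a)))) _ _
  have hradial : ∫ r in Set.Ioi (0:ℝ), r * Real.exp (-(r ^ 2) / 2) = 1 := by
    have hderiv : ∀ r ∈ Set.Ioi (0:ℝ), HasDerivAt (fun x : ℝ => -Real.exp (-(x ^ 2) / 2))
        (r * Real.exp (-(r ^ 2) / 2)) r := by
      intro r _
      have h1 : HasDerivAt (fun x : ℝ => -(x ^ 2) / 2) (-r) r := by
        have h0 := ((hasDerivAt_pow 2 r).neg).div_const 2
        refine h0.congr_deriv ?_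
        norm_num
        ring
      have h2 := (h1.exp).neg
      refine h2.congr_deriv ?_
      ring
    have hcont : ContinuousWithinAt (fun x : ℝ => -Real.exp (-(x ^ 2) / 2)) (Set.Ici 0) 0 :=
      (Continuous.continuousWithinAt (by fun_prop))
    have htend : Filter.Tendsto (fun x : ℝ => -Real.exp (-(x ^ 2) / 2)) Filter.atTop (nhds 0) := by
      have h2 : Filter.Tendsto (fun x : ℝ => x ^ 2 / 2) Filter.atTop Filter.atTop :=
        (Filter.tendsto_pow_atTop two_ne_zero).atTop_div_const two_pos
      have h3 : Filter.Tendsto (fun x : ℝ => -(x ^ 2) / 2) Filter.atTop Filter.atBot := by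
        simpa [neg_div] using h2
      have h4 := (Real.tendsto_exp_atBot.comp h3).neg
      simpa using h4
    have := MeasureTheory.integral_Ioi_of_hasDerivAt_of_nonneg hcont hderiv
      (fun r hr => mul_nonneg (le_of_lt hr) (Real.exp_pos _).le) htend
    rw [this]
    norm_num
  have hangular : ∫ θ in Set.Ioo (-π) π, (2 * π)⁻¹ *
      (Real.sign (Real.cos θ) * Real.sign (Real.sin (θ + a))) = (2 * π)⁻¹ * (4 * a) := by
    rw [MeasureTheory.integral_const_mul]
    congr 1
    rw [← MeasureTheory.integral_Ioc_eq_integral_Ioo,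
      ← intervalIntegral.integral_of_le (by linarith)]
    exact angular_eval habs_a
  rw [step1, step2, step3, step4, hprod, hradial, hangular, one_mul, ha_def]
  field_simp
  ring


lemma inv_sqrt_bound {ρ t : ℝ} (hρ : |ρ| ≤ 1 / 2) (ht : |t| ≤ |ρ|) :
    1 / Real.sqrt (1 - t ^ 2) - 1 ≤ ρ ^ 2 ∧ 0 ≤ 1 / Real.sqrt (1 - t ^ 2) - 1 := by
  have hr2 : ρ ^ 2 ≤ 1 / 4 := by nlinarith [abs_nonneg ρ, sq_abs ρ]
  have ht2 : t ^ 2 ≤ ρ ^ 2 := by nlinarith [abs_nonneg t, sq_abs t, sq_abs ρ]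
  set s := Real.sqrt (1 - ρ ^ 2) with hs_def
  have hs2 : s ^ 2 = 1 - ρ ^ 2 := Real.sq_sqrt (by nlinarith)
  have hs : 0 < s := Real.sqrt_pos.mpr (by nlinarith)
  have hst : s ≤ Real.sqrt (1 - t ^ 2) := Real.sqrt_le_sqrt (by nlinarith)
  have hstpos : 0 < Real.sqrt (1 - t ^ 2) := lt_of_lt_of_le hs hst
  constructor
  · have h1 : 1 / Real.sqrt (1 - t ^ 2) ≤ 1 / s := by
      apply one_div_le_one_div_of_le hs hst
    have key : 1 ≤ s * (1 + ρ ^ 2) := by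
      nlinarith [sq_nonneg (s*(1+ρ^2)-1), sq_nonneg (s*(1+ρ^2)+1), sq_nonneg (s-1), mul_pos hs hs]
    have : 1 / s ≤ 1 + ρ ^ 2 := by
      rw [div_le_iff₀ hs]; nlinarith
    linarith
  · have hle1 : Real.sqrt (1 - t ^ 2) ≤ 1 := by
      have := Real.sqrt_le_sqrt (show 1 - t ^ 2 ≤ 1 by nlinarith)
      simpa using this
    have : 1 ≤ 1 / Real.sqrt (1 - t ^ 2) := by
      rw [le_div_iff₀ hstpos]; linarith
    linarith

lemma arcsin_taylor {ρ : ℝ} (hρ : |ρ| ≤ 1 / 2) : |Real.arcsin ρ - ρ| ≤ |ρ| ^ 3 := by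
  have habs_of_mem : ∀ t ∈ Set.uIcc (0:ℝ) ρ, |t| ≤ |ρ| := by
    intro t ht
    rw [Set.uIcc_eq_union] at ht
    rcases ht with ht | ht <;> rw [Set.mem_Icc] at ht <;> rw [abs_le] <;>
      exact ⟨by linarith [le_abs_self ρ, neg_abs_le ρ], by linarith [le_abs_self ρ, neg_abs_le ρ]⟩
  have h1 : ∀ t ∈ Set.uIcc (0:ℝ) ρ, HasDerivAt (fun x => Real.arcsin x - x)
      (1 / Real.sqrt (1 - t ^ 2) - 1) t := by
    intro t ht
    have habs : |t| ≤ 1 / 2 := le_trans (habs_of_mem t ht) hρ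
    have hne1 : t ≠ 1 := by intro h; rw [h] at habs; norm_num at habs
    have hne2 : t ≠ -1 := by intro h; rw [h] at habs; norm_num at habs
    have := (Real.hasDerivAt_arcsin hne2 hne1).sub (hasDerivAt_id' t)
    exact this
  have hint : IntervalIntegrable (fun t => 1 / Real.sqrt (1 - t ^ 2) - 1) volume 0 ρ := by
    apply ContinuousOn.intervalIntegrable
    apply ContinuousOn.sub _ continuousOn_const
    apply ContinuousOn.div continuousOn_const
    · exact (Real.continuous_sqrt.comp (by continuity)).continuousOn
    · intro t ht
      have habs : |t| ≤ 1/2 := le_trans (habs_of_mem t ht) hρ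
      have : (0:ℝ) < Real.sqrt (1 - t ^ 2) := Real.sqrt_pos.mpr (by nlinarith [sq_abs t, abs_nonneg t])
      exact ne_of_gt this
  have key : Real.arcsin ρ - ρ = ∫ t in (0:ℝ)..ρ, (1 / Real.sqrt (1 - t ^ 2) - 1) := by
    rw [intervalIntegral.integral_eq_sub_of_hasDerivAt h1 hint]
    simp [Real.arcsin_zero]
  rw [key]
  have bound : ∀ t ∈ Set.uIoc (0:ℝ) ρ, ‖1 / Real.sqrt (1 - t ^ 2) - 1‖ ≤ ρ ^ 2 := by
    intro t ht
    have := inv_sqrt_bound hρ (habs_of_mem t (Set.uIoc_subset_uIcc ht))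
    rw [Real.norm_eq_abs, abs_of_nonneg this.2]
    exact this.1
  calc ‖∫ t in (0:ℝ)..ρ, (1 / Real.sqrt (1 - t ^ 2) - 1)‖ ≤ ρ ^ 2 * |ρ - 0| :=
        intervalIntegral.norm_integral_le_of_norm_le_const bound
    _ = |ρ| ^ 3 := by rw [sub_zero, ← sq_abs]; ring

theorem sign_sign_expectation_approx {Ω : Type*} [MeasurableSpace Ω] (μ : Measure Ω)
    [IsProbabilityMeasure μ] (X Y : Ω → ℝ) (hX : Measurable X) (hY : Measurable Y)
    (ρ : ℝ) (hρ : |ρ| ≤ 1 / 2)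
    (hlaw : μ.map (fun ω => (X ω, Y ω)) = biGaussian ρ) :
    |(∫ ω, Real.sign (X ω) * Real.sign (Y ω) ∂μ) - (2 / π) * ρ| ≤ |ρ| ^ 3 := by
  have hpi := Real.pi_pos
  have hmeas : Measurable fun p : ℝ × ℝ => Real.sign p.1 * Real.sign p.2 :=
    (measurable_realSign.comp measurable_fst).mul (measurable_realSign.comp measurable_snd)
  have hmap : ∫ ω, Real.sign (X ω) * Real.sign (Y ω) ∂μ
      = ∫ p : ℝ × ℝ, Real.sign p.1 * Real.sign p.2 ∂(biGaussian ρ) := by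
    rw [← hlaw, integral_map (hX.prodMk hY).aemeasurable hmeas.aestronglyMeasurable]
  rw [hmap, biGaussian_integral hρ]
  have h1 : |Real.arcsin ρ - ρ| ≤ |ρ| ^ 3 := arcsin_taylor hρ
  have h2 : 2 / π * Real.arcsin ρ - 2 / π * ρ = 2 / π * (Real.arcsin ρ - ρ) := by ring
  have h3 : (0:ℝ) < 2 / π := by positivity
  calc |2 / π * Real.arcsin ρ - 2 / π * ρ| = 2 / π * |Real.arcsin ρ - ρ| := by
        rw [h2, abs_mul, abs_of_pos h3]
    _ ≤ 2 / π * |ρ| ^ 3 := by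
        exact mul_le_mul_of_nonneg_left h1 (le_of_lt h3)
    _ ≤ 1 * |ρ| ^ 3 := by
        apply mul_le_mul_of_nonneg_right _ (by positivity)
        rw [div_le_one hpi]
        linarith [Real.two_le_pi]
    _ = |ρ| ^ 3 := one_mul _
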